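/- Let M be an irreducible nonnegative square matrix with index of imprimitivity h. If M is cogredient (conjugate by a permutation matrix) to a matrix in superdiagonal (m₁,…,m_k)-block form in which all k blocks A_{1,2},…,A_{k−1,k},A_{k,1} are nonzero, then k divides h. -/

import Mathlib

open Polynomial

def Matrix.IsReducible {n : ℕ} (M : Matrix (Fin n) (Fin n) ℝ) : Prop :=
  ∃ (p : ℕ), 0 < p ∧ p < n ∧ ∃ σ : Equiv.Perm (Fin n),
    ∀ i j : Fin n, p ≤ (i : ℕ) → (j : ℕ) < p → M (σ i) (σ j) = 0

def Matrix.IsIrreducible' {n : ℕ} (M : Matrix (Fin n) (Fin n) ℝ) : Prop :=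
  ¬ M.IsReducible

noncomputable def Matrix.eigs {n : ℕ} (M : Matrix (Fin n) (Fin n) ℝ) : Multiset ℂ :=
  (M.map (Complex.ofReal)).charpoly.roots

/-- If a finite set of nonzero complex numbers is invariant under multiplication by a
primitive `k`-th root of unity, then its cardinality is divisible by `k`. -/
lemma card_dvd_of_primitive_root_invariant (k : ℕ) (hk : 0 < k) (ω : ℂ)
    (hω : IsPrimitiveRoot ω k) :
    ∀ S : Finset ℂ, (0 : ℂ) ∉ S → (∀ z ∈ S, ω * z ∈ S) → k ∣ S.card := by
  have hωk : ω ^ k = 1 := hω.pow_eq_one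
  have hω0 : ω ≠ 0 := by
    intro h
    rw [h, zero_pow hk.ne'] at hωk
    exact zero_ne_one hωk
  intro S
  induction S using Finset.strongInduction with
  | _ S ih =>
    intro h0 hinv
    rcases S.eq_empty_or_nonempty with rfl | ⟨z, hz⟩
    · simp
    have hz0 : z ≠ 0 := fun h => h0 (h ▸ hz)
    have hSpow : ∀ j : ℕ, ∀ w ∈ S, ω ^ j * w ∈ S := by
      intro j
      induction j with
      | zero => simpa using fun w hw => hw
      | succ j ihj =>
        intro w hw
        have h1 := hinv _ (ihj w hw)
        rwa [← mul_assoc, ← pow_succ'] at h1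
    set O : Finset ℂ := (Finset.range k).image (fun j => ω ^ j * z) with hOdef
    have hOsub : O ⊆ S := by
      intro w hw
      simp only [hOdef, Finset.mem_image, Finset.mem_range] at hw
      obtain ⟨j, _, rfl⟩ := hw
      exact hSpow j z hz
    have hcardO : O.card = k := by
      rw [hOdef, Finset.card_image_of_injOn, Finset.card_range]
      intro i hi j hj hij
      simp only [Finset.coe_range, Set.mem_Iio] at hi hj
      exact hω.pow_inj hi hj (mul_right_cancel₀ hz0 hij)
    have hinv' : ∀ w ∈ S \ O, ω * w ∈ S \ O := by
      intro w hw
      rw [Finset.mem_sdiff] at hw ⊢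
      refine ⟨hinv w hw.1, fun hmem => hw.2 ?_⟩
      simp only [hOdef, Finset.mem_image, Finset.mem_range] at hmem ⊢
      obtain ⟨j, hj, hjw⟩ := hmem
      rcases Nat.eq_zero_or_pos j with rfl | hjpos
      · refine ⟨k - 1, by omega, ?_⟩
        have hkz : ω * (ω ^ (k - 1) * z) = ω ^ 0 * z := by
          rw [← mul_assoc, ← pow_succ']
          have hkk : k - 1 + 1 = k := by omega
          rw [hkk, hωk, pow_zero]
        exact mul_left_cancel₀ hω0 (hkz.trans hjw)
      · refine ⟨j - 1, by omega, ?_⟩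
        have hkz : ω * (ω ^ (j - 1) * z) = ω ^ j * z := by
          rw [← mul_assoc, ← pow_succ']
          congr 2
          omega
        exact mul_left_cancel₀ hω0 (hkz.trans hjw)
    have hOne : O.Nonempty := by
      refine ⟨z, ?_⟩
      simp only [hOdef, Finset.mem_image, Finset.mem_range]
      exact ⟨0, hk, by simp⟩
    have hss : S \ O ⊂ S := Finset.sdiff_ssubset hOsub hOne
    have hdvd := ih _ hss (fun hmem => h0 (Finset.mem_sdiff.mp hmem).1) hinv'
    have hcards : S.card = (S \ O).card + k := by
      rw [Finset.card_sdiff_of_subset hOsub, hcardO]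
      have := Finset.card_le_card hOsub
      omega
    rw [hcards]
    exact Nat.dvd_add hdvd dvd_rfl

lemma eval_charpoly_eq_det {n : ℕ} (A : Matrix (Fin n) (Fin n) ℂ) (z : ℂ) :
    A.charpoly.eval z = (z • (1 : Matrix (Fin n) (Fin n) ℂ) - A).det := by
  rw [Matrix.charpoly, eval_det, Matrix.matPolyEquiv_charmatrix, eval_sub, eval_X, eval_C]
  congr 1
  rw [Matrix.scalar_apply]
  ext i j
  by_cases hij : i = j <;> simp [hij, Matrix.diagonal, Matrix.one_apply]

/-- If an irreducible nonnegative matrix `M`, with index of imprimitivity `h` (the number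
of eigenvalues of maximal modulus `δ₀`), is cogredient (via the permutation `σ`) to a
matrix in superdiagonal `(m 0, …, m (k-1))`-block form (blocks described by the monotone
block-assignment function `b` with fibers of cardinalities `m`), in which all `k`
superdiagonal blocks are nonzero, then `k` divides `h`. -/
theorem superdiagonal_block_form_divides_imprimitivity
    {n k : ℕ} (hk : 0 < k) (M : Matrix (Fin n) (Fin n) ℝ)
    (hM : ∀ i j, 0 ≤ M i j) (hirr : M.IsIrreducible')
    (δ₀ : ℝ) (hδpos : 0 < δ₀) (hδeig : (δ₀ : ℂ) ∈ M.eigs)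
    (hδmax : ∀ δ ∈ M.eigs, ‖δ‖ ≤ δ₀)
    (h : ℕ) (hh : h = (M.eigs.toFinset.filter (fun δ => ‖δ‖ = δ₀)).card)
    (m : Fin k → ℕ) (σ : Equiv.Perm (Fin n)) (b : Fin n → Fin k)
    (hmono : Monotone fun i => (b i : ℕ))
    (hcard : ∀ a : Fin k, (Finset.univ.filter fun i => b i = a).card = m a)
    (hblock : ∀ i j : Fin n, M (σ i) (σ j) ≠ 0 → ((b j : ℕ)) = ((b i : ℕ) + 1) % k)
    (hnonzero : ∀ a : Fin k, ∃ i j : Fin n, b i = a ∧ M (σ i) (σ j) ≠ 0) :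
    k ∣ h := by
  have hk0 : k ≠ 0 := hk.ne'
  set ω : ℂ := Complex.exp (2 * Real.pi * Complex.I / k) with hωdef
  have hω : IsPrimitiveRoot ω k := Complex.isPrimitiveRoot_exp k hk0
  have hωk : ω ^ k = 1 := hω.pow_eq_one
  have hω0 : ω ≠ 0 := by
    intro hc
    rw [hc, zero_pow hk0] at hωk
    exact zero_ne_one hωk
  have habsω : ‖ω‖ = 1 := by
    have h1 : (‖ω‖) ^ k = 1 := by
      rw [← norm_pow, hωk, norm_one]
    have h2 : (0 : ℝ) ≤ ‖ω‖ := norm_nonneg _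
    rcases lt_trichotomy (‖ω‖) 1 with hlt | heq | hgt
    · exact absurd h1 (ne_of_lt (pow_lt_one₀ h2 hlt hk0))
    · exact heq
    · exact absurd h1.symm (ne_of_lt (one_lt_pow₀ hgt hk0))
  have hpowmod : ∀ x : ℕ, ω ^ (x % k) = ω ^ x := by
    intro x
    conv_rhs => rw [← Nat.div_add_mod x k]
    rw [pow_add, pow_mul, hωk, one_pow, one_mul]
  -- The reindexed matrix
  set A : Matrix (Fin n) (Fin n) ℂ := (M.map Complex.ofReal).submatrix σ σ with hA
  have hchar : (M.map Complex.ofReal).charpoly = A.charpoly := by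
    have h1 := Matrix.charpoly_reindex σ.symm (M.map Complex.ofReal)
    rw [Matrix.reindex_apply, Equiv.symm_symm] at h1
    exact h1.symm
  -- the diagonal similarity
  set d : Fin n → ℂ := fun i => ω ^ (b i : ℕ) with hd
  have hd0 : ∀ i, d i ≠ 0 := fun i => pow_ne_zero _ hω0
  set D : Matrix (Fin n) (Fin n) ℂ := Matrix.diagonal d with hD
  set E : Matrix (Fin n) (Fin n) ℂ :=
    Matrix.diagonal (fun i => (d i)⁻¹) with hE
  have hDE : D * E = 1 := by
    rw [hD, hE, Matrix.diagonal_mul_diagonal]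
    have heq : (fun i => d i * (d i)⁻¹) = fun _ : Fin n => (1 : ℂ) :=
      funext fun i => mul_inv_cancel₀ (hd0 i)
    rw [heq, Matrix.diagonal_one]
  have hED : E * D = 1 := by
    rw [hD, hE, Matrix.diagonal_mul_diagonal]
    have heq : (fun i => (d i)⁻¹ * d i) = fun _ : Fin n => (1 : ℂ) :=
      funext fun i => inv_mul_cancel₀ (hd0 i)
    rw [heq, Matrix.diagonal_one]
  have hDunit : IsUnit D := ⟨⟨D, E, hDE, hED⟩, rfl⟩
  have hDinv : D⁻¹ = E := Matrix.inv_eq_right_inv hDE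
  have hconj : D * A * E = ω⁻¹ • A := by
    ext i j
    rw [hD, hE, Matrix.mul_diagonal, Matrix.diagonal_mul, Matrix.smul_apply, smul_eq_mul]
    by_cases hz : A i j = 0
    · rw [hz]; ring
    · have hMz : M (σ i) (σ j) ≠ 0 := by
        intro hc
        apply hz
        rw [hA]
        simp [Matrix.submatrix_apply, Matrix.map_apply, hc]
      have hb := hblock i j hMz
      have hdj : d j = ω ^ ((b i : ℕ) + 1) := by
        rw [hd]
        simp only
        rw [hb, hpowmod]
      rw [hdj, hd]
      simp only
      rw [pow_succ]
      field_simp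
  have hdet : ∀ z : ℂ, A.charpoly.eval (ω * z) = ω ^ n * A.charpoly.eval z := by
    intro z
    rw [eval_charpoly_eq_det, eval_charpoly_eq_det]
    have h1 : (ω * z) • (1 : Matrix (Fin n) (Fin n) ℂ) - A
        = ω • (z • (1 : Matrix (Fin n) (Fin n) ℂ) - ω⁻¹ • A) := by
      rw [smul_sub, smul_smul, smul_smul, mul_inv_cancel₀ hω0, one_smul]
    rw [h1, Matrix.det_smul, Fintype.card_fin]
    congr 1
    have h2 : z • (1 : Matrix (Fin n) (Fin n) ℂ) - ω⁻¹ • A = D * (z • 1 - A) * D⁻¹ := by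
      rw [hDinv, Matrix.mul_sub, Matrix.sub_mul, hconj]
      congr 1
      rw [mul_smul_comm, mul_one, smul_mul_assoc, hDE]
    rw [h2, Matrix.det_conj hDunit]
  have hmemeigs : ∀ z : ℂ, z ∈ M.eigs → ω * z ∈ M.eigs := by
    intro z hzm
    rw [Matrix.eigs, hchar, Polynomial.mem_roots A.charpoly_monic.ne_zero] at hzm ⊢
    simp only [Polynomial.IsRoot.def] at hzm ⊢
    rw [hdet z, hzm, mul_zero]
  have h0S : (0 : ℂ) ∉ M.eigs.toFinset.filter (fun δ => ‖δ‖ = δ₀) := by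
    intro hmem
    rw [Finset.mem_filter, norm_zero] at hmem
    exact absurd hmem.2.symm (ne_of_gt hδpos)
  have hinvS : ∀ z ∈ M.eigs.toFinset.filter (fun δ => ‖δ‖ = δ₀),
      ω * z ∈ M.eigs.toFinset.filter (fun δ => ‖δ‖ = δ₀) := by
    intro z hzm
    rw [Finset.mem_filter, Multiset.mem_toFinset] at hzm ⊢
    refine ⟨hmemeigs z hzm.1, ?_⟩
    rw [norm_mul, habsω, one_mul, hzm.2]
  rw [hh]
  exact card_dvd_of_primitive_root_invariant k hk ω hω _ h0S hinvS
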